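/- Along any interior solution X(t) of the primal dynamics Ẋ = -∫₀¹ X^{1-s} V_τ(X) X^s ds + tr[X V_τ(X)] X with V_τ(X) = ∇F(X) + τ log X, the perturbed objective F_τ(X) = F(X) + τ tr(X log X) satisfies d/dt F_τ(X(t)) ≤ 0, with equality if and only if V_τ(X(t)) is proportional to the identity. -/

import Mathlib

open Matrix
open scoped ComplexOrder

attribute [local instance] Matrix.frobeniusNormedAddCommGroup Matrix.frobeniusNormedSpace

/-- Real power `X^s` of a Hermitian matrix via the spectral decomposition. -/
noncomputable def hermPow {M : ℕ} {X : Matrix (Fin M) (Fin M) ℂ} (hX : X.IsHermitian)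
    (s : ℝ) : Matrix (Fin M) (Fin M) ℂ :=
  (hX.eigenvectorUnitary : Matrix (Fin M) (Fin M) ℂ) *
    Matrix.diagonal (fun i => ((hX.eigenvalues i ^ s : ℝ) : ℂ)) *
      (star (hX.eigenvectorUnitary : Matrix (Fin M) (Fin M) ℂ))

/-- Matrix logarithm of a Hermitian (positive definite) matrix via the spectral decomposition. -/
noncomputable def hermLog {M : ℕ} {X : Matrix (Fin M) (Fin M) ℂ} (hX : X.IsHermitian) :
    Matrix (Fin M) (Fin M) ℂ :=
  (hX.eigenvectorUnitary : Matrix (Fin M) (Fin M) ℂ) *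
    Matrix.diagonal (fun i => ((Real.log (hX.eigenvalues i) : ℝ) : ℂ)) *
      (star (hX.eigenvectorUnitary : Matrix (Fin M) (Fin M) ℂ))


lemma dxl_hermLog_isHermitian {M : ℕ} {X : Matrix (Fin M) (Fin M) ℂ} (hX : X.IsHermitian) :
    (hermLog hX).IsHermitian := by
  show _ = _
  unfold hermLog
  simp only [Matrix.conjTranspose_mul, Matrix.star_eq_conjTranspose,
    Matrix.conjTranspose_conjTranspose, Matrix.diagonal_conjTranspose, Matrix.mul_assoc]
  have hst : (star fun i => ((Real.log (hX.eigenvalues i) : ℝ) : ℂ)) =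
      (fun i => ((Real.log (hX.eigenvalues i) : ℝ) : ℂ)) :=
    funext fun i => Complex.conj_ofReal _
  rw [hst]

lemma dxl_key {M : ℕ} {X : Matrix (Fin M) (Fin M) ℂ} (hX : X.IsHermitian) (hXpd : X.PosDef)
    (htr : X.trace = 1) (V : Matrix (Fin M) (Fin M) ℂ) (hV : V.IsHermitian) :
    (Matrix.trace ((-(∫ s in (0:ℝ)..1, hermPow hX (1-s) * V * hermPow hX s) +
        Matrix.trace (X * V) • X) * V)).re ≤ 0 ∧
      ((Matrix.trace ((-(∫ s in (0:ℝ)..1, hermPow hX (1-s) * V * hermPow hX s) +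
        Matrix.trace (X * V) • X) * V)).re = 0 ↔ ∃ c : ℂ, V = c • 1) := by
  classical
  set U : Matrix (Fin M) (Fin M) ℂ := (hX.eigenvectorUnitary : Matrix (Fin M) (Fin M) ℂ)
    with hUdef
  have hU1 : star U * U = 1 := hX.eigenvectorUnitary.2.1
  have hU2 : U * star U = 1 := hX.eigenvectorUnitary.2.2
  set lam : Fin M → ℝ := hX.eigenvalues with hlamdef
  have hlam : ∀ i, 0 < lam i := fun i => hXpd.eigenvalues_pos i
  set W : Matrix (Fin M) (Fin M) ℂ := star U * V * U with hWdef
  have hW : Wᴴ = W := by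
    rw [hWdef]
    simp [Matrix.conjTranspose_mul, Matrix.star_eq_conjTranspose, Matrix.mul_assoc, hV.eq]
  have hXeq : X = U * Matrix.diagonal (fun i => ((lam i : ℝ) : ℂ)) * star U := by
    exact hX.spectral_theorem
  -- continuity of rpow
  have hrpow : ∀ i : Fin M, Continuous fun s : ℝ => lam i ^ s := by
    intro i
    have h : (fun s : ℝ => lam i ^ s) = fun s => Real.exp (Real.log (lam i) * s) :=
      funext fun s => Real.rpow_def_of_pos (hlam i) s
    rw [h]; exact Real.continuous_exp.comp (continuous_const.mul continuous_id)
  have hpowc : ∀ f : ℝ → ℝ, Continuous f → Continuous fun s => hermPow hX (f s) := by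
    intro f hf
    unfold hermPow
    exact (continuous_const.matrix_mul ((continuous_pi fun i =>
        Complex.continuous_ofReal.comp ((hrpow i).comp hf)).matrix_diagonal)).matrix_mul
      continuous_const
  have hAcont : Continuous fun s : ℝ => hermPow hX (1-s) * V * hermPow hX s :=
    ((hpowc _ (continuous_const.sub continuous_id)).matrix_mul continuous_const).matrix_mul
      (hpowc _ continuous_id)
  -- trace conjugation invariance
  have conjtr : ∀ B : Matrix (Fin M) (Fin M) ℂ, Matrix.trace (U * B * star U) = Matrix.trace B :=
    fun B => by rw [Matrix.trace_mul_cycle, hU1, Matrix.one_mul]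
  -- trace of diagonal sandwich
  have trform : ∀ a b : Fin M → ℂ,
      Matrix.trace (Matrix.diagonal a * W * Matrix.diagonal b * W) =
        ∑ k, ∑ j, a k * b j * (W k j * W j k) := by
    intro a b
    unfold Matrix.trace Matrix.diag
    refine Finset.sum_congr rfl fun k _ => ?_
    rw [Matrix.mul_apply]
    refine Finset.sum_congr rfl fun j _ => ?_
    rw [Matrix.mul_diagonal, Matrix.diagonal_mul]
    ring
  have hWconj : ∀ k j, W k j * W j k = ((Complex.normSq (W k j) : ℝ) : ℂ) := by
    intro k j
    have h := congrFun (congrFun hW j) k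
    rw [Matrix.conjTranspose_apply] at h
    rw [← h, Complex.star_def, Complex.mul_conj]
  set nsq : Fin M → Fin M → ℝ := fun k j => Complex.normSq (W k j) with hnsqdef
  -- trace of A s * V
  have traceAV : ∀ t s : ℝ, Matrix.trace (hermPow hX t * V * hermPow hX s * V) =
      ((∑ k, ∑ j, lam k ^ t * lam j ^ s * nsq k j : ℝ) : ℂ) := by
    intro t s
    have hp : hermPow hX t * V * hermPow hX s * V =
        U * (Matrix.diagonal (fun i => ((lam i ^ t : ℝ) : ℂ)) * W *
          Matrix.diagonal (fun i => ((lam i ^ s : ℝ) : ℂ)) * W) * star U := by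
      rw [hWdef]
      simp only [hermPow, ← hUdef, ← hlamdef, Matrix.mul_assoc, hU2, Matrix.mul_one]
    rw [hp, conjtr, trform]
    push_cast
    refine Finset.sum_congr rfl fun k _ => Finset.sum_congr rfl fun j _ => ?_
    rw [hWconj k j]
    try push_cast
    try ring
  -- diagonal entries of W are real
  have hWdiag : ∀ k, W k k = (((W k k).re : ℝ) : ℂ) := by
    intro k
    have h := congrFun (congrFun hW k) k
    rw [Matrix.conjTranspose_apply, Complex.star_def] at h
    exact (Complex.conj_eq_iff_re.mp h).symm
  set w : Fin M → ℝ := fun k => (W k k).re with hwdef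
  set T : ℝ := ∑ k, lam k * w k with hTdef
  -- trace (X * V) = T
  have htrXV : Matrix.trace (X * V) = ((T : ℝ) : ℂ) := by
    have hp : X * V = U * (Matrix.diagonal (fun i => ((lam i : ℝ) : ℂ)) * W) * star U := by
      rw [hXeq, hWdef]
      simp only [Matrix.mul_assoc, hU2, Matrix.mul_one]
    rw [hp, conjtr]
    have hd : Matrix.trace (Matrix.diagonal (fun i => ((lam i : ℝ) : ℂ)) * W) =
        ∑ k, ((lam k : ℝ) : ℂ) * W k k := by
      unfold Matrix.trace Matrix.diag
      exact Finset.sum_congr rfl fun k _ => by rw [Matrix.diagonal_mul]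
    rw [hd, hTdef]
    push_cast
    exact Finset.sum_congr rfl fun k _ => by rw [hWdiag k]
  -- sum of eigenvalues = 1
  have hsumlam : ∑ k, lam k = 1 := by
    have h : Matrix.trace X = ((∑ k, lam k : ℝ) : ℂ) := by
      rw [hXeq, conjtr, Matrix.trace_diagonal]
      push_cast
      rfl
    rw [htr] at h
    exact_mod_cast h.symm
  -- the c coefficients
  set c : Fin M → Fin M → ℝ := fun k j => ∫ s in (0:ℝ)..1, lam k ^ (1-s) * lam j ^ s with hcdef
  have hkjcont : ∀ k j : Fin M, Continuous fun s : ℝ => lam k ^ (1-s) * lam j ^ s :=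
    fun k j => ((hrpow k).comp (continuous_const.sub continuous_id)).mul (hrpow j)
  have hcpos : ∀ k j, 0 < c k j := fun k j =>
    intervalIntegral.intervalIntegral_pos_of_pos_on ((hkjcont k j).intervalIntegrable 0 1)
      (fun s _ => mul_pos (Real.rpow_pos_of_pos (hlam k) _) (Real.rpow_pos_of_pos (hlam j) _))
      one_pos
  have hckk : ∀ k, c k k = lam k := by
    intro k
    have h : ∀ s : ℝ, lam k ^ (1-s) * lam k ^ s = lam k := fun s => by
      rw [← Real.rpow_add (hlam k)]; norm_num
    rw [hcdef]
    simp only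
    rw [intervalIntegral.integral_congr (g := fun _ => lam k) (fun s _ => h s)]
    simp
  -- swap trace and integral
  have swap : Matrix.trace ((∫ s in (0:ℝ)..1, hermPow hX (1-s) * V * hermPow hX s) * V) =
      ∫ s in (0:ℝ)..1, Matrix.trace (hermPow hX (1-s) * V * hermPow hX s * V) := by
    have hint : @IntervalIntegrable _
        (Matrix.frobeniusNormedAddCommGroup.toMetricSpace.toUniformSpace.toTopologicalSpace) _
        (fun s : ℝ => hermPow hX (1-s) * V * hermPow hX s)
        MeasureTheory.volume 0 1 := hAcont.intervalIntegrable 0 1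
    have := (LinearMap.toContinuousLinearMap
        ((Matrix.traceLinearMap (Fin M) ℂ ℂ).comp (LinearMap.mulRight ℂ V))).intervalIntegral_comp_comm hint
    exact this.symm
  -- compute integral of trace
  set S : ℝ := ∑ k, ∑ j, c k j * nsq k j with hSdef
  have hintS : (∫ s in (0:ℝ)..1, Matrix.trace (hermPow hX (1-s) * V * hermPow hX s * V)) =
      ((S : ℝ) : ℂ) := by
    have h1 : (∫ s in (0:ℝ)..1, Matrix.trace (hermPow hX (1-s) * V * hermPow hX s * V)) =
        ∫ s in (0:ℝ)..1, ((∑ k, ∑ j, lam k ^ (1-s) * lam j ^ s * nsq k j : ℝ) : ℂ) :=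
      intervalIntegral.integral_congr fun s _ => traceAV (1-s) s
    have h2 : (∫ s in (0:ℝ)..1, ((∑ k, ∑ j, lam k ^ (1-s) * lam j ^ s * nsq k j : ℝ) : ℂ)) =
        ((∫ s in (0:ℝ)..1, (∑ k, ∑ j, lam k ^ (1-s) * lam j ^ s * nsq k j : ℝ) : ℝ) : ℂ) :=
      RCLike.intervalIntegral_ofReal
    rw [h1, h2]
    congr 1
    rw [hSdef]
    rw [intervalIntegral.integral_finset_sum]
    · refine Finset.sum_congr rfl fun k _ => ?_
      rw [intervalIntegral.integral_finset_sum]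
      · exact Finset.sum_congr rfl fun j _ => by
          rw [intervalIntegral.integral_mul_const]
      · exact fun j _ => (((hkjcont k j).mul continuous_const).intervalIntegrable 0 1)
    · exact fun k _ => ((continuous_finset_sum _ fun j _ =>
        ((hkjcont k j).mul continuous_const)).intervalIntegrable 0 1)
  -- the main formula
  have main : (Matrix.trace ((-(∫ s in (0:ℝ)..1, hermPow hX (1-s) * V * hermPow hX s) +
      Matrix.trace (X * V) • X) * V)) = ((T^2 - S : ℝ) : ℂ) := by
    rw [Matrix.add_mul, Matrix.neg_mul, Matrix.smul_mul, Matrix.trace_add, Matrix.trace_neg,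
      Matrix.trace_smul, swap, hintS, htrXV, smul_eq_mul]
    push_cast
    ring
  -- decomposition into nonneg parts
  set Dq : ℝ := ∑ k, lam k * (w k - T)^2 with hDqdef
  set O : ℝ := ∑ k, ∑ j ∈ Finset.univ.erase k, c k j * nsq k j with hOdef
  have hSsplit : S = (∑ k, lam k * w k ^ 2) + O := by
    rw [hSdef, hOdef, ← Finset.sum_add_distrib]
    refine Finset.sum_congr rfl fun k _ => ?_
    rw [← Finset.add_sum_erase _ _ (Finset.mem_univ k), hckk k]
    congr 1
    rw [hnsqdef]
    simp only
    rw [hWdiag k, Complex.normSq_ofReal]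
    ring
  have hDq : Dq = (∑ k, lam k * w k ^ 2) - T^2 := by
    have h1 : Dq = ∑ k, (lam k * w k ^ 2 - 2*T*(lam k * w k) + T^2 * lam k) := by
      rw [hDqdef]; exact Finset.sum_congr rfl fun k _ => by ring
    rw [h1, Finset.sum_add_distrib, Finset.sum_sub_distrib, ← Finset.mul_sum, ← Finset.mul_sum,
      ← hTdef, hsumlam]
    ring
  have hkey : T^2 - S = -(Dq + O) := by rw [hSsplit, hDq]; ring
  have hDqnn : 0 ≤ Dq := Finset.sum_nonneg fun k _ => mul_nonneg (hlam k).le (sq_nonneg _)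
  have hOnn : 0 ≤ O := Finset.sum_nonneg fun k _ => Finset.sum_nonneg fun j _ =>
    mul_nonneg (hcpos k j).le (Complex.normSq_nonneg _)
  have hre : (Matrix.trace ((-(∫ s in (0:ℝ)..1, hermPow hX (1-s) * V * hermPow hX s) +
      Matrix.trace (X * V) • X) * V)).re = -(Dq + O) := by
    rw [main, Complex.ofReal_re, hkey]
  constructor
  · rw [hre]; linarith
  rw [hre]
  constructor
  · intro h0
    have hDq0 : Dq = 0 := by linarith
    have hO0 : O = 0 := by linarith
    have hwT : ∀ k, w k = T := by
      intro k
      have := (Finset.sum_eq_zero_iff_of_nonneg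
        (fun k _ => mul_nonneg (hlam k).le (sq_nonneg (w k - T)))).mp hDq0 k (Finset.mem_univ k)
      have h2 : (w k - T)^2 = 0 := by
        rcases mul_eq_zero.mp this with h | h
        · exact absurd h (hlam k).ne'
        · exact h
      have := pow_eq_zero_iff (n := 2) (by norm_num) |>.mp h2
      linarith [sub_eq_zero.mp this]
    have hWoff : ∀ k j, j ≠ k → W k j = 0 := by
      intro k j hjk
      have h1 := (Finset.sum_eq_zero_iff_of_nonneg
        (fun k _ => Finset.sum_nonneg fun j _ =>
          mul_nonneg (hcpos k j).le (Complex.normSq_nonneg _))).mp hO0 k (Finset.mem_univ k)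
      have h2 := (Finset.sum_eq_zero_iff_of_nonneg
        (fun j _ => mul_nonneg (hcpos k j).le (Complex.normSq_nonneg _))).mp h1 j
        (Finset.mem_erase.mpr ⟨hjk, Finset.mem_univ j⟩)
      have h3 : nsq k j = 0 := by
        rcases mul_eq_zero.mp h2 with h | h
        · exact absurd h (hcpos k j).ne'
        · exact h
      exact Complex.normSq_eq_zero.mp h3
    have hWT : W = ((T : ℝ) : ℂ) • (1 : Matrix (Fin M) (Fin M) ℂ) := by
      ext k j
      by_cases hkj : k = j
      · subst hkj
        rw [hWdiag k]
        simp only [Matrix.smul_apply, Matrix.one_apply_eq, smul_eq_mul, mul_one]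
        exact_mod_cast congrArg (Complex.ofReal) (hwT k)
      · simp [Matrix.one_apply_ne hkj, hWoff k j (fun h => hkj h.symm)]
    refine ⟨((T : ℝ) : ℂ), ?_⟩
    have hrecover : U * W * star U = V := by
      rw [hWdef]
      simp only [Matrix.mul_assoc, hU2, Matrix.mul_one]
      rw [← Matrix.mul_assoc, hU2, Matrix.one_mul]
    rw [← hrecover, hWT]
    rw [Matrix.mul_smul, Matrix.smul_mul, Matrix.mul_one, hU2]
  · rintro ⟨cc, rfl⟩
    have hWc : W = cc • (1 : Matrix (Fin M) (Fin M) ℂ) := by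
      rw [hWdef]
      rw [Matrix.mul_smul, Matrix.smul_mul, Matrix.mul_one, hU1]
    have hwc : ∀ k, w k = cc.re := by
      intro k
      rw [hwdef]
      simp [hWc, Matrix.one_apply_eq]
    have hTc : T = cc.re := by
      rw [hTdef]
      calc ∑ k, lam k * w k = ∑ k, lam k * cc.re := Finset.sum_congr rfl fun k _ => by rw [hwc k]
        _ = (∑ k, lam k) * cc.re := by rw [Finset.sum_mul]
        _ = cc.re := by rw [hsumlam, one_mul]
    have hDq0 : Dq = 0 := by
      rw [hDqdef]
      refine Finset.sum_eq_zero fun k _ => ?_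
      rw [hwc k, hTc]
      ring
    have hO0 : O = 0 := by
      rw [hOdef]
      refine Finset.sum_eq_zero fun k _ => Finset.sum_eq_zero fun j hj => ?_
      have hjk : j ≠ k := (Finset.mem_erase.mp hj).1
      have : W k j = 0 := by
        rw [hWc]
        simp [Matrix.one_apply_ne (fun h => hjk h.symm)]
      rw [hnsqdef]
      simp [this]
    rw [hDq0, hO0]
    ring

/-- Lyapunov property. Along interior solutions of the primal dynamics, the
derivative `d/dt F_τ(X(t)) = tr[Ẋ V_τ(X)]` satisfies `tr[Ẋ V_τ(X)].re ≤ 0`, with equality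
iff `V_τ(X(t)) ∝ I`. Here `Ẋ` is given by the primal dynamics
`Ẋ = -∫₀¹ X^{1-s} V_τ(X) X^s ds + tr[X V_τ(X)] X` and `V_τ(X) = ∇F(X) + τ log X`. -/
theorem dxl_lyapunov {M : ℕ} (τ : ℝ) (hτ : 0 < τ)
    (gradF : Matrix (Fin M) (Fin M) ℂ → Matrix (Fin M) (Fin M) ℂ)
    (X Xdot : Matrix (Fin M) (Fin M) ℂ)
    (hX : X.IsHermitian) (hXpd : X.PosDef) (htr : X.trace = 1)
    (hgradF : (gradF X).IsHermitian)
    (hdyn : Xdot =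
      -(∫ s in (0 : ℝ)..1,
          hermPow hX (1 - s) * (gradF X + (τ : ℂ) • hermLog hX) * hermPow hX s) +
        Matrix.trace (X * (gradF X + (τ : ℂ) • hermLog hX)) • X) :
    (Matrix.trace (Xdot * (gradF X + (τ : ℂ) • hermLog hX))).re ≤ 0 ∧
      ((Matrix.trace (Xdot * (gradF X + (τ : ℂ) • hermLog hX))).re = 0 ↔
        ∃ c : ℂ, gradF X + (τ : ℂ) • hermLog hX = c • 1) := by
  
  have hVH : (gradF X + (τ : ℂ) • hermLog hX).IsHermitian :=
    hgradF.add (by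
      show _ = _
      rw [Matrix.conjTranspose_smul, (dxl_hermLog_isHermitian hX).eq, Complex.star_def,
        Complex.conj_ofReal])
  rw [hdyn]
  exact dxl_key hX hXpd htr _ hVH
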